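/- For each ξ with 0 < ξ < √π there exists a unique real λ*(ξ) with λ*(ξ) > -1 such that ω(λ*(ξ),ξ) = 0, where ω(λ,ξ) = 1 - ∫_ℝ (1+λ) w(v)/((1+λ)^2+(vξ)^2) dv and w(v) = e^{-v^2}/√π; moreover -1 < λ*(ξ) < 0. -/

import Mathlib

open MeasureTheory Real Filter

noncomputable def w (v : ℝ) : ℝ := Real.exp (-v ^ 2) / Real.sqrt Real.pi

noncomputable def omg (l ξ : ℝ) : ℝ :=
  1 - ∫ v : ℝ, (1 + l) * w v / ((1 + l) ^ 2 + (v * ξ) ^ 2)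

/-- The substituted integral: Φ(ξ,μ) = ∫ e^{-(μt/ξ)²}/(1+t²) dt. -/
noncomputable def Phi (ξ μ : ℝ) : ℝ := ∫ t : ℝ, Real.exp (-(μ * t / ξ) ^ 2) / (1 + t ^ 2)

lemma phi_integrand_integrable (ξ μ : ℝ) :
    Integrable (fun t : ℝ => Real.exp (-(μ * t / ξ) ^ 2) / (1 + t ^ 2)) := by
  apply integrable_inv_one_add_sq.mono
  · exact (Continuous.div (by continuity) (by continuity) (fun t => by positivity)).aestronglyMeasurable
  · refine Eventually.of_forall fun t => ?_
    rw [Real.norm_eq_abs, Real.norm_eq_abs, abs_of_nonneg (by positivity),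
      abs_of_nonneg (by positivity)]
    rw [div_le_iff₀ (by positivity), inv_mul_cancel₀ (by positivity)]
    exact Real.exp_le_one_iff.2 (neg_nonpos.2 (sq_nonneg _))

lemma integral_lt_of_lt {f g : ℝ → ℝ} (hf : Integrable f) (hg : Integrable g)
    (hle : ∀ t, f t ≤ g t) (hlt : ∀ t, t ≠ 0 → f t < g t) :
    (∫ t, f t) < ∫ t, g t := by
  have h : 0 < ∫ t, (g t - f t) := by
    rw [integral_pos_iff_support_of_nonneg (fun t => sub_nonneg.2 (hle t)) (hg.sub hf)]
    have hsub : {(0:ℝ)}ᶜ ⊆ Function.support fun t => g t - f t := fun t ht =>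
      sub_ne_zero.2 (hlt t ht).ne'
    calc (0:ENNReal) < volume ({(0:ℝ)}ᶜ) :=
          (isOpen_compl_singleton.measure_pos volume ⟨1, by simp⟩)
      _ ≤ _ := measure_mono hsub
  rw [integral_sub hg hf] at h
  linarith

lemma phi_continuous (ξ : ℝ) (hξ : ξ ≠ 0) : Continuous (Phi ξ) := by
  rw [continuous_iff_continuousAt]
  intro μ₀
  apply continuousAt_of_dominated (bound := fun t : ℝ => (1 + t ^ 2)⁻¹)
  · exact Eventually.of_forall fun μ =>
      (Continuous.div (by continuity) (by continuity) (fun t => by positivity)).aestronglyMeasurable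
  · refine Eventually.of_forall fun μ => Eventually.of_forall fun t => ?_
    rw [Real.norm_eq_abs, abs_of_nonneg (by positivity)]
    rw [div_le_iff₀ (by positivity), inv_mul_cancel₀ (by positivity)]
    exact Real.exp_le_one_iff.2 (neg_nonpos.2 (sq_nonneg _))
  · exact integrable_inv_one_add_sq
  · refine Eventually.of_forall fun t => ?_
    exact (Continuous.div (by continuity) (by continuity) (fun μ => by positivity)).continuousAt

lemma phi_anti (ξ : ℝ) (hξ : 0 < ξ) : StrictAntiOn (Phi ξ) (Set.Ici 0) := by
  intro a ha b hb hab
  simp only [Set.mem_Ici] at ha hb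
  apply integral_lt_of_lt (phi_integrand_integrable ξ b) (phi_integrand_integrable ξ a)
  · intro t
    have h2 : a ^ 2 ≤ b ^ 2 := by nlinarith
    have h1 : (a * t / ξ) ^ 2 ≤ (b * t / ξ) ^ 2 := by
      rw [show (a * t / ξ) ^ 2 = a ^ 2 * (t ^ 2 / ξ ^ 2) by ring,
        show (b * t / ξ) ^ 2 = b ^ 2 * (t ^ 2 / ξ ^ 2) by ring]
      exact mul_le_mul_of_nonneg_right h2 (by positivity)
    exact div_le_div_of_nonneg_right (Real.exp_le_exp.2 (by linarith)) (by positivity)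
  · intro t ht
    have h2 : a ^ 2 < b ^ 2 := by nlinarith
    have h1 : (a * t / ξ) ^ 2 < (b * t / ξ) ^ 2 := by
      rw [show (a * t / ξ) ^ 2 = a ^ 2 * (t ^ 2 / ξ ^ 2) by ring,
        show (b * t / ξ) ^ 2 = b ^ 2 * (t ^ 2 / ξ ^ 2) by ring]
      have htξ : 0 < t ^ 2 / ξ ^ 2 := by positivity
      exact mul_lt_mul_of_pos_right h2 htξ
    exact (div_lt_div_iff_of_pos_right (by positivity)).2 (Real.exp_lt_exp.2 (by linarith))

lemma phi_zero (ξ : ℝ) : Phi ξ 0 = Real.pi := by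
  unfold Phi
  simp only [zero_mul, zero_div, neg_zero, ne_eq, OfNat.ofNat_ne_zero,
    not_false_eq_true, zero_pow, Real.exp_zero]
  simp_rw [one_div]
  exact integral_univ_inv_one_add_sq

lemma phi_one_lt (ξ : ℝ) (hξ : 0 < ξ) : Phi ξ 1 < ξ * Real.sqrt Real.pi := by
  have hgauss : (∫ t : ℝ, Real.exp (-(1 / ξ ^ 2) * t ^ 2)) = ξ * Real.sqrt Real.pi := by
    rw [integral_gaussian]
    rw [show Real.pi / (1 / ξ ^ 2) = ξ ^ 2 * Real.pi by field_simp]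
    rw [Real.sqrt_mul (by positivity), Real.sqrt_sq hξ.le]
  have hint : Integrable (fun t : ℝ => Real.exp (-(1 / ξ ^ 2) * t ^ 2)) :=
    integrable_exp_neg_mul_sq (by positivity)
  have heq : ∀ t : ℝ, Real.exp (-(1 * t / ξ) ^ 2) = Real.exp (-(1 / ξ ^ 2) * t ^ 2) := by
    intro t; congr 1; ring
  calc Phi ξ 1 < ∫ t : ℝ, Real.exp (-(1 / ξ ^ 2) * t ^ 2) := by
        apply integral_lt_of_lt (phi_integrand_integrable ξ 1) hint
        · intro t
          rw [heq t]
          exact div_le_self (Real.exp_pos _).le (by nlinarith [sq_nonneg t])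
        · intro t ht
          rw [heq t]
          exact div_lt_self (Real.exp_pos _) (by nlinarith [lt_of_le_of_ne (sq_nonneg t) (Ne.symm (pow_ne_zero 2 ht))])
    _ = ξ * Real.sqrt Real.pi := hgauss

lemma omg_eq (ξ : ℝ) (hξ : 0 < ξ) (l : ℝ) (hl : -1 < l) :
    omg l ξ = 1 - Phi ξ (1 + l) / (ξ * Real.sqrt Real.pi) := by
  set μ := 1 + l with hμdef
  have hμ : 0 < μ := by simp [hμdef]; linarith
  have hπ : 0 < Real.sqrt Real.pi := Real.sqrt_pos.2 Real.pi_pos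
  have key : (∫ v : ℝ, μ * w v / (μ ^ 2 + (v * ξ) ^ 2))
      = Phi ξ μ / (ξ * Real.sqrt Real.pi) := by
    have h1 := MeasureTheory.Measure.integral_comp_mul_left
      (fun v : ℝ => μ * w v / (μ ^ 2 + (v * ξ) ^ 2)) (μ / ξ)
    have habs : |(μ / ξ)⁻¹| = ξ / μ := by
      rw [abs_of_pos (by positivity)]
      field_simp
    rw [habs] at h1
    have h2 : (∫ t : ℝ, μ * w (μ / ξ * t) / (μ ^ 2 + (μ / ξ * t * ξ) ^ 2))
        = ∫ t : ℝ, (1 / (μ * Real.sqrt Real.pi)) * (Real.exp (-(μ * t / ξ) ^ 2) / (1 + t ^ 2)) := by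
      congr 1
      funext t
      unfold w
      rw [show μ / ξ * t * ξ = μ * t by field_simp]
      rw [show -(μ / ξ * t) ^ 2 = -(μ * t / ξ) ^ 2 by ring]
      rw [show μ ^ 2 + (μ * t) ^ 2 = μ ^ 2 * (1 + t ^ 2) by ring]
      field_simp
    rw [h2, integral_const_mul] at h1
    -- h1 : (1/(μ√π)) * Phi ξ μ = (ξ/μ) • ∫ v, f v
    have h3 : (∫ v : ℝ, μ * w v / (μ ^ 2 + (v * ξ) ^ 2))
        = (μ / ξ) * ((1 / (μ * Real.sqrt Real.pi)) * Phi ξ μ) := by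
      rw [show (1 / (μ * Real.sqrt Real.pi)) * Phi ξ μ
          = (1 / (μ * Real.sqrt Real.pi)) * ∫ t : ℝ, Real.exp (-(μ * t / ξ) ^ 2) / (1 + t ^ 2) from rfl]
      rw [h1, smul_eq_mul]
      field_simp
      congr 1; funext v; ring
    rw [h3]
    field_simp
  unfold omg
  rw [← hμdef, key]

lemma omg_zero_iff (ξ : ℝ) (hξ : 0 < ξ) (l : ℝ) (hl : -1 < l) :
    omg l ξ = 0 ↔ Phi ξ (1 + l) = ξ * Real.sqrt Real.pi := by
  have hπ : 0 < Real.sqrt Real.pi := Real.sqrt_pos.2 Real.pi_pos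
  rw [omg_eq ξ hξ l hl]
  constructor
  · intro h
    have : Phi ξ (1 + l) / (ξ * Real.sqrt Real.pi) = 1 := by linarith
    field_simp at this
    linarith
  · intro h
    rw [h, div_self (by positivity)]
    ring

/-- for 0 < ξ < √π there is a unique λ* > -1 with ω(λ*,ξ) = 0,
and moreover -1 < λ* < 0. -/
theorem stmt4 (ξ : ℝ) (hξ0 : 0 < ξ) (hξπ : ξ < Real.sqrt Real.pi) :
    ∃ l : ℝ, (-1 < l ∧ l < 0) ∧ omg l ξ = 0 ∧
      ∀ l' : ℝ, -1 < l' → omg l' ξ = 0 → l' = l := by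
  have hπ : 0 < Real.sqrt Real.pi := Real.sqrt_pos.2 Real.pi_pos
  set c := ξ * Real.sqrt Real.pi with hc
  have hc0 : 0 < c := by positivity
  have hcπ : c < Real.pi := by
    calc c < Real.sqrt Real.pi * Real.sqrt Real.pi := by
          exact mul_lt_mul_of_pos_right hξπ hπ
      _ = Real.pi := Real.mul_self_sqrt Real.pi_pos.le
  have h0 : c < Phi ξ 0 := by rw [phi_zero]; exact hcπ
  have h1 : Phi ξ 1 < c := phi_one_lt ξ hξ0
  have hcont : ContinuousOn (Phi ξ) (Set.Icc 0 1) :=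
    (phi_continuous ξ hξ0.ne').continuousOn
  have hIVT := intermediate_value_Ioo' (zero_le_one) hcont
  obtain ⟨μ, hμIoo, hμeq⟩ := hIVT ⟨h1, h0⟩
  refine ⟨μ - 1, ⟨by linarith [hμIoo.1], by linarith [hμIoo.2]⟩, ?_, ?_⟩
  · rw [omg_zero_iff ξ hξ0 _ (by linarith [hμIoo.1])]
    rw [show 1 + (μ - 1) = μ by ring]
    exact hμeq
  · intro l' hl' homg
    rw [omg_zero_iff ξ hξ0 _ hl'] at homg
    have heq : Phi ξ (1 + l') = Phi ξ μ := by rw [homg, hμeq]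
    have := (phi_anti ξ hξ0).injOn (Set.mem_Ici.2 (by linarith : (0:ℝ) ≤ 1 + l'))
      (Set.mem_Ici.2 (by linarith [hμIoo.1] : (0:ℝ) ≤ μ)) heq
    linarith
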